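/- Let f : J → ℝ be continuous and T ∈ ℍₙ with eigenvalues λ₁,...,λₙ contained in J. Then the C*-convex hull of {f(T)} equals {Σᵢ₌₁ⁿ f(λᵢ)Eᵢ : Eᵢ ≥ 0, Σᵢ₌₁ⁿ Eᵢ = I}. -/

import Mathlib

noncomputable section
open scoped ComplexOrder
open Matrix

lemma sum_stdBasisMatrix_diag_eq_one {n : ℕ} :
    ∑ i : Fin n, single i i (1 : ℂ) = 1 := by
  ext a b
  simp only [Matrix.sum_apply, Matrix.one_apply, Matrix.single, Matrix.of_apply]
  rcases eq_or_ne a b with rfl | h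
  · simp
  · rw [if_neg h]
    refine Finset.sum_eq_zero fun i _ => if_neg ?_
    rintro ⟨rfl, rfl⟩; exact h rfl

lemma star_stdBasisMatrix_one {n : ℕ} (i j : Fin n) :
    star (single i j (1 : ℂ)) = single j i 1 := by
  ext a b
  simp only [star_eq_conjTranspose, conjTranspose_apply, Matrix.single, Matrix.of_apply,
    and_comm]
  split <;> simp

lemma diagonal_eq_sum_smul {n : ℕ} (d : Fin n → ℂ) :
    diagonal d = ∑ i, d i • single i i (1 : ℂ) := by
  ext a b
  simp only [Matrix.sum_apply, Matrix.smul_apply, Matrix.single, Matrix.of_apply,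
    diagonal_apply, smul_eq_mul]
  rcases eq_or_ne a b with rfl | h
  · rw [if_pos rfl, Finset.sum_eq_single a (fun i _ hi => by rw [if_neg, mul_zero]; rintro ⟨rfl, -⟩; exact hi rfl) (by simp)]
    simp
  · rw [if_neg h]
    refine (Finset.sum_eq_zero fun i _ => ?_).symm
    rw [if_neg, mul_zero]; rintro ⟨rfl, rfl⟩; exact h rfl

lemma stdBasisMatrix_posSemidef {n : ℕ} (i : Fin n) :
    (single i i (1 : ℂ)).PosSemidef := by
  have : single i i (1 : ℂ) =
      (single i i (1 : ℂ))ᴴ * single i i (1 : ℂ) := by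
    rw [← star_eq_conjTranspose, star_stdBasisMatrix_one, single_mul_single_same, one_mul]
  nth_rewrite 1 [this]
  exact posSemidef_conjTranspose_mul_self _


/-- For continuous f : J → ℝ and Hermitian T with eigenvalues in J, the
C*-convex hull of f(T) is {Σᵢ f(λᵢ) Eᵢ : Eᵢ ≥ 0, Σᵢ Eᵢ = I}. -/
theorem cstarConvexHull_cfc_eq {n : ℕ} (J : Set ℝ) (f : ℝ → ℝ)
    (hf : ContinuousOn f J) (T : Matrix (Fin n) (Fin n) ℂ) (hT : T.IsHermitian)
    (hev : ∀ i, hT.eigenvalues i ∈ J) :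
    {X : Matrix (Fin n) (Fin n) ℂ | ∃ (m : ℕ) (C : Fin m → Matrix (Fin n) (Fin n) ℂ),
        ∑ i, star (C i) * C i = 1 ∧ X = ∑ i, star (C i) * (cfc f T) * C i} =
    {X : Matrix (Fin n) (Fin n) ℂ | ∃ E : Fin n → Matrix (Fin n) (Fin n) ℂ,
        (∀ i, (E i).PosSemidef) ∧ ∑ i, E i = 1 ∧
        X = ∑ i, (f (hT.eigenvalues i) : ℂ) • E i} := by
  classical
  set U : Matrix (Fin n) (Fin n) ℂ := (hT.eigenvectorUnitary : Matrix (Fin n) (Fin n) ℂ) with hUdef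
  have hU1 : star U * U = 1 := Unitary.star_mul_self_of_mem (SetLike.coe_mem _)
  have hU2 : U * star U = 1 := Unitary.mul_star_self_of_mem (SetLike.coe_mem _)
  have cancel : ∀ Y : Matrix (Fin n) (Fin n) ℂ, star U * (U * Y) = Y := fun Y => by
    rw [← mul_assoc, hU1, one_mul]
  set c : Fin n → ℂ := fun i => (f (hT.eigenvalues i) : ℂ) with hc
  have hcfc : cfc f T = ∑ i, c i • (U * single i i 1 * star U) := by
    rw [hT.cfc_eq]
    show U * diagonal (RCLike.ofReal ∘ f ∘ hT.eigenvalues) * star U = _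
    have : (RCLike.ofReal ∘ f ∘ hT.eigenvalues : Fin n → ℂ) = c := rfl
    rw [this, diagonal_eq_sum_smul]
    simp only [Finset.mul_sum, Finset.sum_mul, mul_smul_comm, smul_mul_assoc, mul_assoc]
  have hQpsd : ∀ i : Fin n, (U * single i i 1 * star U).PosSemidef := fun i => by
    simpa [star_eq_conjTranspose] using (stdBasisMatrix_posSemidef i).mul_mul_conjTranspose_same U
  have hQsum : ∑ i : Fin n, U * single i i 1 * star U = 1 := by
    rw [← Finset.sum_mul, ← Finset.mul_sum, sum_stdBasisMatrix_diag_eq_one, mul_one, hU2]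
  ext X
  simp only [Set.mem_setOf_eq]
  constructor
  · rintro ⟨m, C, hC, rfl⟩
    refine ⟨fun i => ∑ j, star (C j) * (U * single i i 1 * star U) * C j,
      fun i => ?_, ?_, ?_⟩
    · refine Finset.sum_induction _ _ (fun a b ha hb => ha.add hb) .zero fun j _ => ?_
      simpa [star_eq_conjTranspose] using (hQpsd i).conjTranspose_mul_mul_same (C j)
    · rw [Finset.sum_comm]
      have h1 : ∀ j, (∑ i : Fin n, star (C j) * (U * single i i 1 * star U) * C j)
          = star (C j) * C j := fun j => by
        rw [← Finset.sum_mul, ← Finset.mul_sum, hQsum, mul_one]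
      simp only [h1, hC]
    · rw [hcfc]
      simp only [Finset.mul_sum, Finset.sum_mul, mul_smul_comm, smul_mul_assoc,
        Finset.smul_sum]
      exact Finset.sum_comm
  · rintro ⟨E, hE, hEsum, rfl⟩
    set B : Fin n → Matrix (Fin n) (Fin n) ℂ := fun i => (open MatrixOrder in CFC.sqrt (E i)) with hBdef
    have hB2 : ∀ i, B i * B i = E i := fun i => by open MatrixOrder in exact CFC.sqrt_mul_sqrt_self (E i) (hE i).nonneg
    have hBs : ∀ i, star (B i) = B i := fun i => by
      rw [star_eq_conjTranspose]; open MatrixOrder in exact (CFC.sqrt_nonneg (E i)).posSemidef.1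
    set Cm : Fin n → Fin n → Matrix (Fin n) (Fin n) ℂ :=
      fun i k => U * single i k 1 * B i with hCm
    have key : ∀ (i k : Fin n) (M : Matrix (Fin n) (Fin n) ℂ),
        star (Cm i k) * (U * M * star U) * Cm i k
          = B i * (single k i 1 * M * single i k 1) * B i := by
      intro i k M
      rw [hCm]
      simp only [Matrix.star_mul, star_star, hBs, star_stdBasisMatrix_one]
      simp only [mul_assoc, cancel]
    have key1 : ∀ i k, star (Cm i k) * Cm i k = B i * single k k 1 * B i := by
      intro i k
      rw [hCm]
      simp only [Matrix.star_mul, star_star, hBs, star_stdBasisMatrix_one]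
      simp only [mul_assoc, cancel]
      rw [show single k i (1:ℂ) * (single i k 1 * B i)
            = single k k 1 * B i by
          rw [← mul_assoc, single_mul_single_same, one_mul]]
    have key2 : ∀ i k, star (Cm i k) * cfc f T * Cm i k
        = c i • (B i * single k k 1 * B i) := by
      intro i k
      rw [hcfc]
      simp only [Finset.mul_sum, Finset.sum_mul, mul_smul_comm, smul_mul_assoc]
      rw [Finset.sum_eq_single i (fun j _ hj => ?_) (by simp)]
      · rw [key i k (single i i 1)]
        simp only [single_mul_single_same, one_mul, mul_one]
      · rw [key i k (single j j 1),
          show single k i (1:ℂ) * single j j 1 = 0 from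
            single_mul_single_of_ne (c := (1:ℂ)) k i j (Ne.symm hj) 1,
          zero_mul, mul_zero, zero_mul, smul_zero]
    have hEi : ∀ i, ∑ k, B i * single k k 1 * B i = E i := fun i => by
      rw [← Finset.sum_mul, ← Finset.mul_sum, sum_stdBasisMatrix_diag_eq_one, mul_one, hB2]
    refine ⟨n * n, fun p => Cm (finProdFinEquiv.symm p).1 (finProdFinEquiv.symm p).2, ?_, ?_⟩
    · rw [Fintype.sum_equiv finProdFinEquiv.symm _
        (fun q : Fin n × Fin n => star (Cm q.1 q.2) * Cm q.1 q.2) (fun p => rfl),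
        Fintype.sum_prod_type]
      simp only [key1, hEi, hEsum]
    · rw [Fintype.sum_equiv finProdFinEquiv.symm _
        (fun q : Fin n × Fin n => star (Cm q.1 q.2) * cfc f T * Cm q.1 q.2) (fun p => rfl),
        Fintype.sum_prod_type]
      simp only [key2]
      refine Finset.sum_congr rfl fun i _ => ?_
      rw [← Finset.smul_sum, hEi]
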